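/- For all 0 < p < q < 1, kl(p,q) ≥ (q − p)² / (2σ²), where σ² = sup_{r ∈ [p,q]} r(1 − r). -/

import Mathlib

open Real

/-- The Bernoulli Kullback–Leibler divergence. -/
noncomputable def klBer (p q : ℝ) : ℝ :=
  p * Real.log (p / q) + (1 - p) * Real.log ((1 - p) / (1 - q))

theorem pinsker_bernoulli (p q : ℝ) (hp : 0 < p) (hpq : p < q) (hq : q < 1) :
    klBer p q ≥ (q - p) ^ 2 / (2 * sSup ((fun r => r * (1 - r)) '' Set.Icc p q)) := by
  set σ := sSup ((fun r => r * (1 - r)) '' Set.Icc p q) with hσdef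
  have hpq' : p ≤ q := hpq.le
  have huIcc : Set.uIcc p q = Set.Icc p q := Set.uIcc_of_le hpq'
  have hcont : ContinuousOn (fun r : ℝ => r * (1 - r)) (Set.Icc p q) :=
    (continuous_id.mul (continuous_const.sub continuous_id)).continuousOn
  have hbdd : BddAbove ((fun r : ℝ => r * (1 - r)) '' Set.Icc p q) :=
    (isCompact_Icc.image_of_continuousOn hcont).bddAbove
  have hσ_ge : ∀ s ∈ Set.Icc p q, s * (1 - s) ≤ σ := fun s hs =>
    le_csSup hbdd ⟨s, hs, rfl⟩
  have hσpos : 0 < σ :=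
    lt_of_lt_of_le (by nlinarith) (hσ_ge p ⟨le_refl p, hpq'⟩)
  set g : ℝ → ℝ := fun s =>
    p * (Real.log p - Real.log s) + (1 - p) * (Real.log (1 - p) - Real.log (1 - s)) with hg
  have hderiv : ∀ s ∈ Set.uIcc p q, HasDerivAt g ((s - p) / (s * (1 - s))) s := by
    intro s hs
    rw [huIcc] at hs
    have hs0 : 0 < s := lt_of_lt_of_le hp hs.1
    have hs1 : 0 < 1 - s := by linarith [lt_of_le_of_lt hs.2 hq]
    have h1 : HasDerivAt (fun t : ℝ => Real.log t) s⁻¹ s := Real.hasDerivAt_log hs0.ne'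
    have h2 : HasDerivAt (fun t : ℝ => Real.log (1 - t)) ((1 - s)⁻¹ * (-1)) s := by
      have := (Real.hasDerivAt_log hs1.ne').comp s ((hasDerivAt_id s).const_sub 1)
      exact this
    have h3 : HasDerivAt g (p * (0 - s⁻¹) + (1 - p) * (0 - (1 - s)⁻¹ * (-1))) s := by
      exact (((hasDerivAt_const s (Real.log p)).sub h1).const_mul p).add
        (((hasDerivAt_const s (Real.log (1 - p))).sub h2).const_mul (1 - p))
    convert h3 using 1
    field_simp
    ring
  have hcont2 : ContinuousOn (fun s : ℝ => (s - p) / (s * (1 - s))) (Set.Icc p q) := by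
    apply ContinuousOn.div
    · exact (continuous_id.sub continuous_const).continuousOn
    · exact hcont
    · intro s hs
      have hs0 : 0 < s := lt_of_lt_of_le hp hs.1
      have hs1 : 0 < 1 - s := by linarith [lt_of_le_of_lt hs.2 hq]
      positivity
  have hint : IntervalIntegrable (fun s : ℝ => (s - p) / (s * (1 - s))) MeasureTheory.volume p q := by
    apply ContinuousOn.intervalIntegrable
    rwa [huIcc]
  have hftc : ∫ s in p..q, (s - p) / (s * (1 - s)) = g q - g p :=
    intervalIntegral.integral_eq_sub_of_hasDerivAt hderiv hint
  have hkl : klBer p q = g q - g p := by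
    have hq0 : 0 < q := lt_trans hp hpq
    have h1q : 0 < 1 - q := by linarith
    have h1p : 0 < 1 - p := by linarith
    simp only [klBer, hg]
    rw [Real.log_div hp.ne' hq0.ne', Real.log_div h1p.ne' h1q.ne']
    ring_nf
  have hint2 : IntervalIntegrable (fun s : ℝ => (s - p) / σ) MeasureTheory.volume p q :=
    ((continuous_id.sub continuous_const).div_const σ).intervalIntegrable p q
  have hmono : ∫ s in p..q, (s - p) / σ ≤ ∫ s in p..q, (s - p) / (s * (1 - s)) := by
    apply intervalIntegral.integral_mono_on hpq' hint2 hint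
    intro s hs
    have hs0 : 0 < s := lt_of_lt_of_le hp hs.1
    have hs1 : 0 < 1 - s := by linarith [lt_of_le_of_lt hs.2 hq]
    have hsp : 0 ≤ s - p := by linarith [hs.1]
    exact div_le_div_of_nonneg_left hsp (by positivity) (hσ_ge s hs)
  have hcalc : ∫ s in p..q, (s - p) / σ = (q - p) ^ 2 / (2 * σ) := by
    rw [intervalIntegral.integral_div]
    rw [intervalIntegral.integral_sub intervalIntegral.intervalIntegrable_id
      intervalIntegrable_const]
    rw [integral_id, intervalIntegral.integral_const]
    simp only [smul_eq_mul]
    field_simp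
    ring
  rw [ge_iff_le, ← hcalc, hkl, ← hftc]
  exact hmono
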